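/- arXiv:2208.00930 — 3 statements merged into one kernel-verified Lean document; each statement's English description precedes it below -/
import Mathlib

section
/- Let c be a nonzero real number and let P be a square complex matrix satisfying P^2 = I. Set p = cosh(c) / exp(|c|). Then p ∈ [1/2, 1] and exp(c • P) = exp(|c|) • ( p • I + (1 − p) • (sign(c) • P) ); that is, exp(c • P) is, up to the scalar factor exp(|c|), a convex combination of the identity matrix and the matrix sign(c) • P. -/
/-!
STATEMENT 1: For nonzero real `c` and a square complex matrix `P` with `P ^ 2 = 1`,
setting `p = cosh c / exp |c|`, we have `p ∈ [1/2, 1]` and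
`exp (c • P) = exp |c| • (p • I + (1 - p) • (sign c • P))`,
i.e. `exp (c • P)` is, up to the factor `exp |c|`, a convex combination of the
identity and `sign c • P`.
-/

noncomputable section

open Matrix
open scoped Nat

set_option maxHeartbeats 1000000 in
/-- Exponential of a scalar multiple of an idempotent in a complex Banach algebra. -/
theorem exp_smul_idem_aux {𝔸 : Type*} [NormedRing 𝔸] [NormedAlgebra ℂ 𝔸] [CompleteSpace 𝔸]
    (e : 𝔸) (he : e * e = e) (t : ℂ) :
    NormedSpace.exp (t • e) = 1 + (Complex.exp t - 1) • e := by
  have hen : ∀ n : ℕ, e ^ (n + 1) = e := by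
    intro n
    induction n with
    | zero => simp
    | succ k ih => rw [pow_succ, ih, he]
  have hsum : Summable fun n : ℕ => ((n ! : ℂ))⁻¹ • (t • e) ^ n :=
    NormedSpace.expSeries_summable' (t • e)
  have hsc : Summable fun n : ℕ => ((n ! : ℂ))⁻¹ • t ^ n :=
    NormedSpace.expSeries_summable' (𝕂 := ℂ) t
  have hsc1 : Summable fun n : ℕ => (((n + 1)! : ℂ))⁻¹ • t ^ (n + 1) :=
    (summable_nat_add_iff 1).mpr hsc
  have hexp_t : Complex.exp t = 1 + ∑' n : ℕ, (((n + 1)! : ℂ))⁻¹ • t ^ (n + 1) := by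
    have := Summable.tsum_eq_zero_add (f := fun n : ℕ => ((n ! : ℂ))⁻¹ • t ^ n) hsc
    rw [Complex.exp_eq_exp_ℂ]
    simp only [NormedSpace.exp_eq_tsum ℂ]
    rw [this]
    simp
  simp only [NormedSpace.exp_eq_tsum ℂ]
  rw [Summable.tsum_eq_zero_add hsum]
  have hterm : ∀ n : ℕ, (((n + 1)! : ℂ))⁻¹ • (t • e) ^ (n + 1)
      = ((((n + 1)! : ℂ))⁻¹ • t ^ (n + 1)) • e := by
    intro n
    rw [smul_pow, hen, smul_smul, smul_eq_mul]
  calc ((0! : ℂ))⁻¹ • (t • e) ^ 0 + ∑' n : ℕ, (((n + 1)! : ℂ))⁻¹ • (t • e) ^ (n + 1)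
      = 1 + ∑' n : ℕ, ((((n + 1)! : ℂ))⁻¹ • t ^ (n + 1)) • e := by
        simp only [hterm]; simp
    _ = 1 + (∑' n : ℕ, (((n + 1)! : ℂ))⁻¹ • t ^ (n + 1)) • e := by
        rw [Summable.tsum_smul_const hsc1]
    _ = 1 + (Complex.exp t - 1) • e := by
        rw [hexp_t, add_sub_cancel_left]

theorem matrix_exp_of_involution_convex_combination (m : ℕ) (c : ℝ) (hc : c ≠ 0)
    (P : Matrix (Fin m) (Fin m) ℂ) (hP : P ^ 2 = 1)
    (p : ℝ) (hp : p = Real.cosh c / Real.exp |c|) :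
    p ∈ Set.Icc (1 / 2 : ℝ) 1 ∧
    NormedSpace.exp ((c : ℂ) • P)
        = Real.exp |c| •
            (p • (1 : Matrix (Fin m) (Fin m) ℂ) + (1 - p) • (Real.sign c • P)) := by
  letI : SeminormedRing (Matrix (Fin m) (Fin m) ℂ) := Matrix.linftyOpSemiNormedRing
  letI : NormedRing (Matrix (Fin m) (Fin m) ℂ) := Matrix.linftyOpNormedRing
  letI : NormedAlgebra ℂ (Matrix (Fin m) (Fin m) ℂ) := Matrix.linftyOpNormedAlgebra
  letI : NormedAlgebra ℚ (Matrix (Fin m) (Fin m) ℂ) := NormedAlgebra.restrictScalars ℚ ℂ _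
  have hec : (0 : ℝ) < Real.exp |c| := Real.exp_pos _
  -- real scalar identities
  have hr1 : Real.exp |c| * p = Real.cosh c := by
    rw [hp]; field_simp
  have hr2 : Real.exp |c| * (1 - p) * Real.sign c = Real.sinh c := by
    have h3 : Real.exp |c| * (1 - p) = Real.sinh |c| := by
      have h4 := Real.cosh_add_sinh (|c|)
      have h5 : Real.cosh |c| = Real.cosh c := Real.cosh_abs c
      rw [hp]; field_simp; linarith
    rw [h3]
    rcases hc.lt_or_gt with h | h
    · rw [abs_of_neg h, Real.sign_of_neg h, Real.sinh_neg]; ring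
    · rw [abs_of_pos h, Real.sign_of_pos h]; ring
  refine ⟨⟨?_, ?_⟩, ?_⟩
  · -- 1/2 ≤ p
    rw [hp, le_div_iff₀ hec, Real.cosh_eq]
    rcases abs_cases c with ⟨h, _⟩ | ⟨h, _⟩
    · rw [h]; have := Real.exp_pos (-c); linarith
    · rw [h]; have := Real.exp_pos c; linarith
  · -- p ≤ 1
    rw [hp, div_le_one hec]
    have h4 := Real.cosh_add_sinh (|c|)
    have h5 : Real.cosh |c| = Real.cosh c := Real.cosh_abs c
    have h6 : 0 ≤ Real.sinh |c| := Real.sinh_nonneg_iff.mpr (abs_nonneg c)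
    linarith
  -- the matrix identity
  have hPP : P * P = 1 := by rw [← pow_two]; exact hP
  have hQQ : ((2 : ℂ)⁻¹ • (1 + P)) * ((2 : ℂ)⁻¹ • (1 + P)) = (2 : ℂ)⁻¹ • (1 + P) := by
    rw [smul_mul_assoc, mul_smul_comm, smul_smul]
    simp only [add_mul, mul_add, sub_mul, mul_sub, one_mul, mul_one, hPP]
    module
  have hRR : ((2 : ℂ)⁻¹ • (1 - P)) * ((2 : ℂ)⁻¹ • (1 - P)) = (2 : ℂ)⁻¹ • (1 - P) := by
    rw [smul_mul_assoc, mul_smul_comm, smul_smul]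
    simp only [add_mul, mul_add, sub_mul, mul_sub, one_mul, mul_one, hPP]
    module
  have hQR : ((2 : ℂ)⁻¹ • (1 + P)) * ((2 : ℂ)⁻¹ • (1 - P)) = 0 := by
    rw [smul_mul_assoc, mul_smul_comm, smul_smul]
    simp only [add_mul, mul_add, sub_mul, mul_sub, one_mul, mul_one, hPP]
    module
  have hRQ : ((2 : ℂ)⁻¹ • (1 - P)) * ((2 : ℂ)⁻¹ • (1 + P)) = 0 := by
    rw [smul_mul_assoc, mul_smul_comm, smul_smul]
    simp only [add_mul, mul_add, sub_mul, mul_sub, one_mul, mul_one, hPP]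
    module
  have hcomm : Commute ((c : ℂ) • ((2 : ℂ)⁻¹ • (1 + P))) ((-(c : ℂ)) • ((2 : ℂ)⁻¹ • (1 - P))) := by
    have hc0 : Commute ((2 : ℂ)⁻¹ • (1 + P)) ((2 : ℂ)⁻¹ • (1 - P)) := by
      show _ * _ = _ * _
      rw [hQR, hRQ]
    exact (hc0.smul_left _).smul_right _
  have hsplit : (c : ℂ) • P
      = (c : ℂ) • ((2 : ℂ)⁻¹ • (1 + P)) + (-(c : ℂ)) • ((2 : ℂ)⁻¹ • (1 - P)) := by
    module
  have hexp : NormedSpace.exp ((c : ℂ) • P)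
      = Complex.cosh c • (1 : Matrix (Fin m) (Fin m) ℂ) + Complex.sinh c • P := by
    rw [hsplit, Matrix.exp_add_of_commute _ _ hcomm,
      show NormedSpace.exp ((c : ℂ) • ((2 : ℂ)⁻¹ • (1 + P))) = _ from exp_smul_idem_aux _ hQQ _,
      show NormedSpace.exp ((-(c : ℂ)) • ((2 : ℂ)⁻¹ • (1 - P))) = _ from exp_smul_idem_aux _ hRR _]
    simp only [mul_add, add_mul, mul_sub, sub_mul, mul_one, one_mul, smul_mul_assoc,
      mul_smul_comm, smul_smul, hPP]
    simp only [Complex.cosh, Complex.sinh]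
    module
  -- convert real smul to complex smul
  have hreal : ∀ (r : ℝ) (M : Matrix (Fin m) (Fin m) ℂ), r • M = ((r : ℂ)) • M := by
    intro r M
    rw [← smul_one_smul ℂ r M, Complex.real_smul, mul_one]
  rw [hexp, hreal (Real.exp |c|), hreal p, hreal (1 - p), hreal (Real.sign c)]
  rw [smul_add, smul_smul, smul_smul, smul_smul]
  have e1 : (Real.exp |c| : ℂ) * (p : ℂ) = Complex.cosh (c : ℂ) := by
    rw [← Complex.ofReal_mul, hr1, Complex.ofReal_cosh]
  have e2 : (Real.exp |c| : ℂ) * ((1 - p : ℝ) : ℂ) * ((Real.sign c : ℝ) : ℂ)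
      = Complex.sinh (c : ℂ) := by
    rw [← Complex.ofReal_mul, ← Complex.ofReal_mul, hr2, Complex.ofReal_sinh]
  rw [e1, e2]
end
end

section
/- Let U be a 2^N × 2^N unitary matrix, let |0⟩⟨0| be the projector onto the first computational basis state of one qubit, let ρ = |0⟩⟨0| ⊗ (2^{−N} • I_{2^N}) be the one-clean-qubit input state, let H₁ be the 2×2 Hadamard matrix, and let CU = |0⟩⟨0| ⊗ I_{2^N} + |1⟩⟨1| ⊗ U be the controlled-U operation. Let σ = CU · (H₁ ⊗ I_{2^N}) · ρ · (H₁ ⊗ I_{2^N})† · CU† be the state after applying the Hadamard on the clean qubit followed by the controlled-U. Then tr( (X ⊗ I_{2^N}) · σ ) = Re(tr U) / 2^N, where X is the single-qubit Pauli X matrix. -/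
/-!
STATEMENT 6: In the DQC1 trace-estimation circuit (one clean qubit in `|0⟩`, `N`
maximally mixed qubits, a Hadamard on the clean qubit followed by controlled-`U`),
the expectation of Pauli `X` on the clean qubit equals `Re (tr U) / 2^N`.
-/

noncomputable section

open Matrix
open scoped Kronecker

/-- The single-qubit Pauli X matrix. -/
def PauliX : Matrix (Fin 2) (Fin 2) ℂ := !![0, 1; 1, 0]

/-- The projector `|0⟩⟨0|` on one qubit. -/
def proj0 : Matrix (Fin 2) (Fin 2) ℂ := !![1, 0; 0, 0]

/-- The projector `|1⟩⟨1|` on one qubit. -/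
def proj1 : Matrix (Fin 2) (Fin 2) ℂ := !![0, 0; 0, 1]

/-- The single-qubit Hadamard matrix. -/
def Hadamard : Matrix (Fin 2) (Fin 2) ℂ :=
  (((Real.sqrt 2)⁻¹ : ℝ) : ℂ) • !![1, 1; 1, -1]

lemma kronecker_conjTranspose' {m n : Type*} [Fintype m] [Fintype n]
    [DecidableEq m] [DecidableEq n]
    (A : Matrix m m ℂ) (B : Matrix n n ℂ) : (A ⊗ₖ B)ᴴ = Aᴴ ⊗ₖ Bᴴ := by
  ext ⟨i, j⟩ ⟨k, l⟩
  simp [Matrix.conjTranspose_apply, Matrix.kroneckerMap_apply, mul_comm]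

lemma had_proj0_had : Hadamard * proj0 * Hadamardᴴ = ((2:ℂ)⁻¹) • !![1, 1; 1, 1] := by
  have hs : (((Real.sqrt 2)⁻¹ : ℝ) : ℂ) * (((Real.sqrt 2)⁻¹ : ℝ) : ℂ) = (2:ℂ)⁻¹ := by
    rw [← Complex.ofReal_mul, ← mul_inv, Real.mul_self_sqrt (by norm_num : (0:ℝ) ≤ 2)]
    norm_num
  have hM : (!![1, 1; 1, -1] : Matrix (Fin 2) (Fin 2) ℂ) * proj0 *
      (!![1, 1; 1, -1] : Matrix (Fin 2) (Fin 2) ℂ)ᴴ = !![1, 1; 1, 1] := by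
    ext i j
    fin_cases i <;> fin_cases j <;>
      simp [proj0, Matrix.mul_apply, Fin.sum_univ_two, Matrix.conjTranspose_apply]
  rw [Hadamard, Matrix.conjTranspose_smul, Matrix.smul_mul, Matrix.smul_mul, Matrix.mul_smul,
    smul_smul, Complex.star_def, Complex.conj_ofReal, hs, hM]

theorem dqc1_trace_estimation_real_part (N : ℕ)
    (U : Matrix (Fin N → Fin 2) (Fin N → Fin 2) ℂ)
    (hU : U ∈ Matrix.unitaryGroup (Fin N → Fin 2) ℂ) :
    let I2N : Matrix (Fin N → Fin 2) (Fin N → Fin 2) ℂ := 1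
    let ρ := proj0 ⊗ₖ (((2 : ℂ) ^ N)⁻¹ • I2N)
    let CU := proj0 ⊗ₖ I2N + proj1 ⊗ₖ U
    let σ := CU * (Hadamard ⊗ₖ I2N) * ρ * (Hadamard ⊗ₖ I2N)ᴴ * CUᴴ
    Matrix.trace ((PauliX ⊗ₖ I2N) * σ) = (((Matrix.trace U).re / 2 ^ N : ℝ) : ℂ) := by
  intro I2N ρ CU σ
  have hUU : U * Uᴴ = 1 := by
    have := (Matrix.mem_unitaryGroup_iff.mp hU)
    simpa [Matrix.star_eq_conjTranspose] using this
  have hp0 : proj0ᴴ = proj0 := by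
    ext i j; fin_cases i <;> fin_cases j <;> simp [proj0, Matrix.conjTranspose_apply]
  have hp1 : proj1ᴴ = proj1 := by
    ext i j; fin_cases i <;> fin_cases j <;> simp [proj1, Matrix.conjTranspose_apply]
  have hCUH : CUᴴ = proj0 ⊗ₖ I2N + proj1 ⊗ₖ Uᴴ := by
    simp only [CU, Matrix.conjTranspose_add, kronecker_conjTranspose', hp0, hp1,
      Matrix.conjTranspose_one, I2N]
  -- the middle part
  have hmid : (Hadamard ⊗ₖ I2N) * ρ * (Hadamard ⊗ₖ I2N)ᴴ
      = ((2:ℂ)⁻¹ * ((2 : ℂ) ^ N)⁻¹) • ((!![1, 1; 1, 1] : Matrix (Fin 2) (Fin 2) ℂ) ⊗ₖ I2N) := by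
    rw [kronecker_conjTranspose', Matrix.conjTranspose_one]
    show (Hadamard ⊗ₖ I2N) * (proj0 ⊗ₖ (((2 : ℂ) ^ N)⁻¹ • I2N)) * (Hadamardᴴ ⊗ₖ I2N) = _
    rw [Matrix.kronecker_smul, Matrix.mul_smul, Matrix.smul_mul,
      ← Matrix.mul_kronecker_mul, ← Matrix.mul_kronecker_mul, Matrix.mul_one, Matrix.one_mul,
      had_proj0_had, Matrix.smul_kronecker, smul_smul, mul_comm]
  have key : CU * ((!![1, 1; 1, 1] : Matrix (Fin 2) (Fin 2) ℂ) ⊗ₖ I2N) * CUᴴ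
      = (!![1, 0; 0, 0] : Matrix (Fin 2) (Fin 2) ℂ) ⊗ₖ I2N
        + (!![0, 1; 0, 0] : Matrix (Fin 2) (Fin 2) ℂ) ⊗ₖ Uᴴ
        + (!![0, 0; 1, 0] : Matrix (Fin 2) (Fin 2) ℂ) ⊗ₖ U
        + (!![0, 0; 0, 1] : Matrix (Fin 2) (Fin 2) ℂ) ⊗ₖ I2N := by
    have e00 : proj0 * !![1, 1; 1, 1] * proj0 = (!![1, 0; 0, 0] : Matrix (Fin 2) (Fin 2) ℂ) := by
      ext i j; fin_cases i <;> fin_cases j <;> simp [proj0, Matrix.mul_apply, Fin.sum_univ_two]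
    have e01 : proj0 * !![1, 1; 1, 1] * proj1 = (!![0, 1; 0, 0] : Matrix (Fin 2) (Fin 2) ℂ) := by
      ext i j; fin_cases i <;> fin_cases j <;>
        simp [proj0, proj1, Matrix.mul_apply, Fin.sum_univ_two]
    have e10 : proj1 * !![1, 1; 1, 1] * proj0 = (!![0, 0; 1, 0] : Matrix (Fin 2) (Fin 2) ℂ) := by
      ext i j; fin_cases i <;> fin_cases j <;>
        simp [proj0, proj1, Matrix.mul_apply, Fin.sum_univ_two]
    have e11 : proj1 * !![1, 1; 1, 1] * proj1 = (!![0, 0; 0, 1] : Matrix (Fin 2) (Fin 2) ℂ) := by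
      ext i j; fin_cases i <;> fin_cases j <;>
        simp [proj1, Matrix.mul_apply, Fin.sum_univ_two]
    rw [hCUH]
    show (proj0 ⊗ₖ I2N + proj1 ⊗ₖ U) * (!![1, 1; 1, 1] ⊗ₖ I2N) * (proj0 ⊗ₖ I2N + proj1 ⊗ₖ Uᴴ) = _
    simp only [Matrix.add_mul, Matrix.mul_add, ← Matrix.mul_kronecker_mul]
    simp only [I2N, Matrix.mul_one, Matrix.one_mul, e00, e01, e10, e11, hUU]
    abel
  have hσ : σ = ((2:ℂ)⁻¹ * ((2 : ℂ) ^ N)⁻¹) •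
      ((!![1, 0; 0, 0] : Matrix (Fin 2) (Fin 2) ℂ) ⊗ₖ I2N
        + (!![0, 1; 0, 0] : Matrix (Fin 2) (Fin 2) ℂ) ⊗ₖ Uᴴ
        + (!![0, 0; 1, 0] : Matrix (Fin 2) (Fin 2) ℂ) ⊗ₖ U
        + (!![0, 0; 0, 1] : Matrix (Fin 2) (Fin 2) ℂ) ⊗ₖ I2N) := by
    have h1 : σ = CU * ((Hadamard ⊗ₖ I2N) * ρ * (Hadamard ⊗ₖ I2N)ᴴ) * CUᴴ := by
      show CU * (Hadamard ⊗ₖ I2N) * ρ * (Hadamard ⊗ₖ I2N)ᴴ * CUᴴ = _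
      simp only [Matrix.mul_assoc]
    rw [h1, hmid, Matrix.mul_smul, Matrix.smul_mul, key]
  -- traces of 2x2 pieces against PauliX
  have t00 : Matrix.trace (PauliX * (!![1, 0; 0, 0] : Matrix (Fin 2) (Fin 2) ℂ)) = 0 := by
    simp [PauliX, Matrix.trace_fin_two, Matrix.mul_apply, Fin.sum_univ_two]
  have t01 : Matrix.trace (PauliX * (!![0, 1; 0, 0] : Matrix (Fin 2) (Fin 2) ℂ)) = 1 := by
    simp [PauliX, Matrix.trace_fin_two, Matrix.mul_apply, Fin.sum_univ_two]
  have t10 : Matrix.trace (PauliX * (!![0, 0; 1, 0] : Matrix (Fin 2) (Fin 2) ℂ)) = 1 := by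
    simp [PauliX, Matrix.trace_fin_two, Matrix.mul_apply, Fin.sum_univ_two]
  have t11 : Matrix.trace (PauliX * (!![0, 0; 0, 1] : Matrix (Fin 2) (Fin 2) ℂ)) = 0 := by
    simp [PauliX, Matrix.trace_fin_two, Matrix.mul_apply, Fin.sum_univ_two]
  rw [hσ, Matrix.mul_smul, Matrix.trace_smul]
  simp only [Matrix.mul_add, Matrix.trace_add, ← Matrix.mul_kronecker_mul,
    Matrix.trace_kronecker, t00, t01, t10, t11]
  simp only [I2N, Matrix.one_mul, Matrix.mul_one, Matrix.trace_conjTranspose]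
  have hadd : Matrix.trace U + (starRingEnd ℂ) (Matrix.trace U)
      = 2 * ((Matrix.trace U).re : ℂ) := by
    exact_mod_cast Complex.add_conj (Matrix.trace U)
  have h2 : ((2:ℂ)^N) ≠ 0 := pow_ne_zero _ two_ne_zero
  rw [smul_eq_mul, zero_mul, one_mul, one_mul, zero_add, add_zero,
    Complex.star_def, add_comm ((starRingEnd ℂ) (Matrix.trace U)), hadd]
  push_cast
  field_simp
end
end

section
/- Let U be a 2^N × 2^N unitary matrix, let ρ = |0⟩⟨0| ⊗ (2^{−N} • I_{2^N}), let H₁ be the 2×2 Hadamard matrix, and let CU = |0⟩⟨0| ⊗ I_{2^N} + |1⟩⟨1| ⊗ U. Let σ = CU · (H₁ ⊗ I_{2^N}) · ρ · (H₁ ⊗ I_{2^N})† · CU†. Then tr( (Y ⊗ I_{2^N}) · σ ) = Im(tr U) / 2^N, where Y = [[0, −i], [i, 0]] is the single-qubit Pauli Y matrix. -/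
/-!
STATEMENT 7: In the DQC1 trace-estimation circuit (one clean qubit in `|0⟩`, `N`
maximally mixed qubits, a Hadamard on the clean qubit followed by controlled-`U`),
the expectation of Pauli `Y` on the clean qubit equals `Im (tr U) / 2^N`.
-/

noncomputable section

open Matrix
open scoped Kronecker

/-- The single-qubit Pauli Y matrix. -/
def PauliY : Matrix (Fin 2) (Fin 2) ℂ := !![0, -Complex.I; Complex.I, 0]

lemma kron_conjT {m n : Type*} [Fintype m] [Fintype n]
    (A : Matrix m m ℂ) (B : Matrix n n ℂ) : (A ⊗ₖ B)ᴴ = Aᴴ ⊗ₖ Bᴴ := by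
  ext ⟨i, j⟩ ⟨k, l⟩
  simp [conjTranspose_apply, kroneckerMap_apply, mul_comm]

lemma hH : Hadamardᴴ = Hadamard := by
  ext i j
  fin_cases i <;> fin_cases j <;> simp [Hadamard, conjTranspose_apply]

lemma hp0 : proj0ᴴ = proj0 := by
  ext i j; fin_cases i <;> fin_cases j <;> simp [proj0, conjTranspose_apply]

lemma hp1 : proj1ᴴ = proj1 := by
  ext i j; fin_cases i <;> fin_cases j <;> simp [proj1, conjTranspose_apply]

lemma hs2' : ((Real.sqrt 2 : ℝ) : ℂ)⁻¹ * ((Real.sqrt 2 : ℝ) : ℂ)⁻¹ = 1/2 := by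
  rw [← mul_inv, ← Complex.ofReal_mul, Real.mul_self_sqrt (by norm_num)]
  norm_num

lemma e00 : (PauliY * (proj0 * Hadamard * proj0 * Hadamard * proj0)).trace = 0 := by
  simp [PauliY, proj0, Hadamard, Matrix.smul_mul, Matrix.mul_smul, trace_smul,
    Matrix.mul_fin_two, Matrix.trace_fin_two]

lemma e10 : (PauliY * (proj1 * Hadamard * proj0 * Hadamard * proj0)).trace = -Complex.I/2 := by
  simp [PauliY, proj0, proj1, Hadamard, Matrix.smul_mul, Matrix.mul_smul, trace_smul,
    Matrix.mul_fin_two, Matrix.trace_fin_two, smul_smul, smul_eq_mul]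
  rw [hs2']
  ring

lemma e01 : (PauliY * (proj0 * Hadamard * proj0 * Hadamard * proj1)).trace = Complex.I/2 := by
  simp [PauliY, proj0, proj1, Hadamard, Matrix.smul_mul, Matrix.mul_smul, trace_smul,
    Matrix.mul_fin_two, Matrix.trace_fin_two, smul_smul, smul_eq_mul]
  rw [hs2']
  ring

lemma e11 : (PauliY * (proj1 * Hadamard * proj0 * Hadamard * proj1)).trace = 0 := by
  simp [PauliY, proj0, proj1, Hadamard, Matrix.smul_mul, Matrix.mul_smul, trace_smul,
    Matrix.mul_fin_two, Matrix.trace_fin_two]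

theorem dqc1_trace_estimation_imaginary_part (N : ℕ)
    (U : Matrix (Fin N → Fin 2) (Fin N → Fin 2) ℂ)
    (hU : U ∈ Matrix.unitaryGroup (Fin N → Fin 2) ℂ) :
    let I2N : Matrix (Fin N → Fin 2) (Fin N → Fin 2) ℂ := 1
    let ρ := proj0 ⊗ₖ (((2 : ℂ) ^ N)⁻¹ • I2N)
    let CU := proj0 ⊗ₖ I2N + proj1 ⊗ₖ U
    let σ := CU * (Hadamard ⊗ₖ I2N) * ρ * (Hadamard ⊗ₖ I2N)ᴴ * CUᴴ
    Matrix.trace ((PauliY ⊗ₖ I2N) * σ) = (((Matrix.trace U).im / 2 ^ N : ℝ) : ℂ) := by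
  intro I2N ρ CU σ
  have h1 : U * Uᴴ = 1 := by
    have := (Matrix.mem_unitaryGroup_iff).mp hU
    simpa [Matrix.star_eq_conjTranspose] using this
  simp only [σ, CU, ρ, I2N, kron_conjT, conjTranspose_add, conjTranspose_one,
    kronecker_smul, smul_mul_assoc, Matrix.mul_smul, add_mul, mul_add,
    ← mul_kronecker_mul, Matrix.mul_one, Matrix.one_mul, h1,
    trace_add, trace_smul, trace_kronecker, hH, hp0, hp1, e00, e10, e01, e11]
  rw [Matrix.trace_conjTranspose]
  set t := Matrix.trace U with ht
  have htr1 : (Matrix.trace (1 : Matrix (Fin N → Fin 2) (Fin N → Fin 2) ℂ)) =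
      ((2 : ℂ) ^ N) := by
    simp [Matrix.trace_one]
  rw [htr1]
  have h2 : ((2 : ℂ) ^ N) ≠ 0 := pow_ne_zero _ two_ne_zero
  simp only [smul_eq_mul, Complex.star_def]
  push_cast
  have hsub := Complex.sub_conj t
  push_cast at hsub
  have hII := Complex.I_mul_I
  linear_combination ((2 : ℂ) ^ N)⁻¹ * (-(Complex.I)/2) * hsub -
    ((2 : ℂ) ^ N)⁻¹ * (t.im : ℂ) * hII
end
end
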